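/- Let k ≥ 3 and let w = (w_1,...,w_r) be a palindrome with ⌈2k/3⌉ < w_i ≤ k for all i. Consider the graph G built from disjoint cliques C_0,...,C_r each of size ⌊k/3⌋, with all edges between C_{i−1} and C_i for each i, together with disjoint cliques C^p_1,...,C^p_r with |C^p_i| = w_i − 2⌊k/3⌋, where C^p_i is completely joined to C_{i−1} and C_i. Then the maximal cliques of G are exactly the sets M_i = C_{i−1} ∪ C_i ∪ C^p_i for i = 1,...,r, and |M_i| = w_i. -/

import Mathlib

/-- The vertex type of the gadget graph: the cliques `C_0, …, C_r` (each of size `⌊k/3⌋`)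
together with the cliques `C^p_1, …, C^p_r` (with `|C^p_i| = w i - 2⌊k/3⌋`). -/
def GadgetV (r k : ℕ) (w : Fin r → ℕ) : Type :=
  (Fin (r + 1) × Fin (k / 3)) ⊕ (Σ i : Fin r, Fin (w i - 2 * (k / 3)))

/-- The set `M_i = C_{i-1} ∪ C_i ∪ C^p_i`. -/
def GadgetM (r k : ℕ) (w : Fin r → ℕ) (i : Fin r) : Set (GadgetV r k w) :=
  {v | match v with
    | Sum.inl (j, _) => j = i.castSucc ∨ j = i.succ
    | Sum.inr x => x.1 = i}

/-- The gadget graph: two distinct vertices are adjacent iff they lie in a common `M_i`. -/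
def GadgetG (r k : ℕ) (w : Fin r → ℕ) : SimpleGraph (GadgetV r k w) :=
  SimpleGraph.fromRel (fun u v => ∃ i, u ∈ GadgetM r k w i ∧ v ∈ GadgetM r k w i)

instance (r k : ℕ) (w : Fin r → ℕ) : Finite (GadgetV r k w) := by
  unfold GadgetV; infer_instance

/-- Left endpoint of the interval of indices `i` with `v ∈ M_i`. -/
def gadgetLep {r k : ℕ} {w : Fin r → ℕ} (v : GadgetV r k w) : ℕ :=
  match v with
  | Sum.inl (j, _) => j.val - 1
  | Sum.inr x => x.1.val

/-- Right endpoint of the interval of indices `i` with `v ∈ M_i`. -/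
def gadgetRep {r k : ℕ} {w : Fin r → ℕ} (v : GadgetV r k w) : ℕ :=
  match v with
  | Sum.inl (j, _) => min j.val (r - 1)
  | Sum.inr x => x.1.val

lemma gadget_mem_iff {r k : ℕ} {w : Fin r → ℕ} (hr : 0 < r) (v : GadgetV r k w) (i : Fin r) :
    v ∈ GadgetM r k w i ↔ gadgetLep v ≤ i.val ∧ i.val ≤ gadgetRep v := by
  rcases v with ⟨j, y⟩ | x
  · have hj : j.val ≤ r := Nat.lt_succ_iff.mp j.isLt
    have hi : i.val < r := i.isLt
    simp only [GadgetM, Membership.mem, Set.Mem, Set.ofPred, gadgetLep, gadgetRep, Fin.ext_iff,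
      Fin.coe_castSucc, Fin.val_succ]
    omega
  · have hi : i.val < r := i.isLt
    have hx : x.1.val < r := x.1.isLt
    simp only [GadgetM, Membership.mem, Set.Mem, Set.ofPred, gadgetLep, gadgetRep, Fin.ext_iff]
    omega

lemma gadget_lep_le_rep {r k : ℕ} {w : Fin r → ℕ} (v : GadgetV r k w) :
    gadgetLep v ≤ gadgetRep v := by
  rcases v with ⟨j, y⟩ | x
  · have hj : j.val ≤ r := Nat.lt_succ_iff.mp j.isLt
    simp only [gadgetLep, gadgetRep]; omega
  · simp [gadgetLep, gadgetRep]

lemma gadget_rep_lt {r k : ℕ} {w : Fin r → ℕ} (hr : 0 < r) (v : GadgetV r k w) :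
    gadgetRep v < r := by
  rcases v with ⟨j, y⟩ | x
  · simp only [gadgetRep]; omega
  · exact x.1.isLt

/-- Every nonempty clique is contained in some `M_i`. -/
lemma gadget_clique_subset {r k : ℕ} (hr : 0 < r) {w : Fin r → ℕ} {S : Set (GadgetV r k w)}
    (hS : (GadgetG r k w).IsClique S) (hne : S.Nonempty) :
    ∃ i, S ⊆ GadgetM r k w i := by
  obtain ⟨v0, hv0, hmax⟩ := Set.exists_max_image S gadgetLep (Set.toFinite S) hne
  have h0 : gadgetLep v0 < r := lt_of_le_of_lt (gadget_lep_le_rep v0) (gadget_rep_lt hr v0)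
  refine ⟨⟨gadgetLep v0, h0⟩, fun v hv => ?_⟩
  rw [gadget_mem_iff hr]
  refine ⟨hmax v hv, ?_⟩
  rcases eq_or_ne v v0 with rfl | hne'
  · exact gadget_lep_le_rep v
  · have hadj := hS hv0 hv (Ne.symm hne')
    rw [GadgetG, SimpleGraph.fromRel_adj] at hadj
    obtain ⟨-, ⟨i, h1, h2⟩ | ⟨i, h2, h1⟩⟩ := hadj <;>
    · rw [gadget_mem_iff hr] at h1 h2
      exact le_trans h1.1 h2.2

lemma gadget_Mi_clique {r k : ℕ} {w : Fin r → ℕ} (i : Fin r) :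
    (GadgetG r k w).IsClique (GadgetM r k w i) := by
  intro u hu v hv huv
  rw [GadgetG, SimpleGraph.fromRel_adj]
  exact ⟨huv, Or.inl ⟨i, hu, hv⟩⟩

theorem gadget_maximal_cliques (k r : ℕ) (hk : 3 ≤ k) (hr : 0 < r) (w : Fin r → ℕ)
    (hpal : ∀ i : Fin r, w i = w i.rev)
    (hlb : ∀ i, (2 * k + 2) / 3 < w i) (hub : ∀ i, w i ≤ k) :
    (∀ S : Set (GadgetV r k w),
      ((GadgetG r k w).IsClique S ∧
          ∀ S', (GadgetG r k w).IsClique S' → S ⊆ S' → S' = S) ↔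
        ∃ i, S = GadgetM r k w i) ∧
    (∀ i, Nat.card (GadgetM r k w i) = w i) := by
  -- the pendant cliques are nonempty
  have hpos : ∀ i : Fin r, 0 < w i - 2 * (k / 3) := by
    intro i
    have h1 : 2 * (k / 3) ≤ 2 * k / 3 := Nat.mul_div_le_mul_div_assoc 2 k 3
    have h2 : 2 * k / 3 ≤ (2 * k + 2) / 3 := Nat.div_le_div_right (by omega)
    have := hlb i
    omega
  have hMne : ∀ i : Fin r, (Sum.inr ⟨i, ⟨0, hpos i⟩⟩ : GadgetV r k w) ∈ GadgetM r k w i :=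
    fun i => rfl
  constructor
  · intro S
    constructor
    · rintro ⟨hcl, hmaxS⟩
      have hne : S.Nonempty := by
        by_contra h
        rw [Set.not_nonempty_iff_eq_empty] at h
        subst h
        have heq := hmaxS (GadgetM r k w ⟨0, hr⟩) (gadget_Mi_clique _) (Set.empty_subset _)
        exact absurd (hMne ⟨0, hr⟩) (by rw [heq]; exact Set.notMem_empty _)
      obtain ⟨i, hSi⟩ := gadget_clique_subset hr hcl hne
      exact ⟨i, (hmaxS _ (gadget_Mi_clique i) hSi).symm⟩
    · rintro ⟨i, rfl⟩
      refine ⟨gadget_Mi_clique i, fun S' hcl' hsub => ?_⟩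
      have hne' : S'.Nonempty := ⟨_, hsub (hMne i)⟩
      obtain ⟨j, hSj⟩ := gadget_clique_subset hr hcl' hne'
      have : (Sum.inr ⟨i, ⟨0, hpos i⟩⟩ : GadgetV r k w) ∈ GadgetM r k w j :=
        hSj (hsub (hMne i))
      have hij : i = j := by
        simpa [GadgetM, Membership.mem, Set.Mem, Set.ofPred] using this
      subst hij
      exact le_antisymm hSj hsub
  · intro i
    -- decompose M_i as a disjoint union
    have hdecomp : GadgetM r k w i =
        (Sum.inl '' (({i.castSucc, i.succ} : Set (Fin (r + 1))) ×ˢ Set.univ)) ∪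
        (Sum.inr '' {x : Σ j : Fin r, Fin (w j - 2 * (k / 3)) | x.1 = i}) := by
      ext v
      rcases v with ⟨j, y⟩ | ⟨j0, y0⟩
      · change (j = i.castSucc ∨ j = i.succ) ↔ _
        unfold GadgetV
        simp only [GadgetM, Set.mem_setOf_eq, Set.mem_union, Set.mem_image, Set.mem_prod,
          Set.mem_univ, and_true, Set.mem_insert_iff, Set.mem_singleton_iff, Prod.exists]
        constructor
        · rintro (rfl | rfl)
          · exact Or.inl ⟨_, y, Or.inl rfl, rfl⟩
          · exact Or.inl ⟨_, y, Or.inr rfl, rfl⟩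
        · rintro (⟨a, b, h1 | h1, h2⟩ | ⟨q, -, h2⟩)
          · injection h2 with h3
            exact Or.inl ((congrArg Prod.fst h3).symm.trans h1)
          · injection h2 with h3
            exact Or.inr ((congrArg Prod.fst h3).symm.trans h1)
          · exact absurd h2 (by simp)
      · change (j0 = i) ↔ _
        unfold GadgetV
        simp only [GadgetM, Set.mem_setOf_eq, Set.mem_union, Set.mem_image, Set.mem_setOf_eq]
        constructor
        · rintro rfl
          exact Or.inr ⟨_, rfl, rfl⟩
        · rintro (⟨a, -, h2⟩ | ⟨q, hq, h2⟩)
          · exact absurd h2 (by simp)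
          · injection h2 with h3
            rw [h3] at hq
            exact hq
    rw [Nat.card_coe_set_eq, hdecomp]
    unfold GadgetV
    rw [Set.ncard_union_eq (by
      rw [Set.disjoint_left]
      rintro a ⟨p, -, rfl⟩ ⟨q, -, h⟩
      exact Sum.inl_ne_inr h.symm)]
    rw [Set.ncard_image_of_injective _ Sum.inl_injective,
      Set.ncard_image_of_injective _ Sum.inr_injective]
    have h1 : (({i.castSucc, i.succ} : Set (Fin (r + 1))) ×ˢ
        (Set.univ : Set (Fin (k / 3)))).ncard = 2 * (k / 3) := by
      rw [Set.ncard_eq_toFinset_card', Set.toFinset_prod, Finset.card_product,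
        Set.toFinset_univ, Finset.card_univ, Fintype.card_fin]
      congr 1
      rw [Set.toFinset_insert, Set.toFinset_singleton, Finset.card_insert_of_notMem
        (by simp [Fin.ext_iff]), Finset.card_singleton]
    have h2 : {x : Σ j : Fin r, Fin (w j - 2 * (k / 3)) | x.1 = i}.ncard =
        w i - 2 * (k / 3) := by
      rw [← Nat.card_coe_set_eq]
      have e : {x : Σ j : Fin r, Fin (w j - 2 * (k / 3)) | x.1 = i} ≃
          Fin (w i - 2 * (k / 3)) :=
        { toFun := fun x => x.2 ▸ x.1.2
          invFun := fun y => ⟨⟨i, y⟩, rfl⟩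
          left_inv := by rintro ⟨⟨j, y⟩, rfl⟩; rfl
          right_inv := fun y => rfl }
      rw [Nat.card_congr e, Nat.card_eq_fintype_card, Fintype.card_fin]
    rw [h1, h2]
    have := hpos i
    have h3 : 2 * (k / 3) ≤ w i := by omega
    omega
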